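/- Let (X, ·), (A, *) be racks, Φ: A → Conj(Aut(X)) a rack homomorphism, and B: X → A a map. Then B is a relative averaging operator (B(x) * B(y) = B(Φ_{B(y)}(x)) for all x, y) if and only if the graph Γ_B = {(B(x), x) : x ∈ X} is a subrack of the semidirect product rack A ⋉_Φ X, where (a, x) ∘ (b, y) = (a * b, Φ_b(x)). -/

import Mathlib

/-- A (right) rack: right translations are bijections and right self-distributivity holds. -/
def IsRack {X : Type*} (op : X → X → X) : Prop :=
  (∀ y, Function.Bijective fun x => op x y) ∧
  ∀ x y z, op (op x y) z = op (op x z) (op y z)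

/-- A subset `S` of a rack is a subrack when right translations by elements of `S`
restrict to bijections of `S` (in particular `S` is closed under the operation). -/
def IsSubrack {X : Type*} (op : X → X → X) (S : Set X) : Prop :=
  ∀ b ∈ S, Set.BijOn (fun a => op a b) S S

/-- Let `(X, ·)`, `(A, *)` be racks and `Φ : A → Conj(Aut X)` a rack homomorphism
(automorphisms act on the right, so `Φ_{a*b}(x) = Φ_b(Φ_a(Φ_b⁻¹ x))` in left notation).
A map `B : X → A` is a relative averaging operator, i.e. `B(x) * B(y) = B(Φ_{B y}(x))`,
iff its graph `Γ_B = {(B x, x)}` is a subrack of the semidirect product rack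
`A ⋉_Φ X`, where `(a, x) ∘ (b, y) = (a * b, Φ_b(x))`. -/
theorem stmt12 {X A : Type*} (opX : X → X → X) (opA : A → A → A)
    (hX : IsRack opX) (hA : IsRack opA)
    (Φ : A → Equiv.Perm X)
    (hΦaut : ∀ (a : A) (x y : X), Φ a (opX x y) = opX (Φ a x) (Φ a y))
    (hΦhom : ∀ (a b : A) (x : X), Φ (opA a b) x = Φ b (Φ a ((Φ b)⁻¹ x)))
    (B : X → A) :
    (∀ x y : X, opA (B x) (B y) = B (Φ (B y) x)) ↔
    IsSubrack (fun p q : A × X => (opA p.1 q.1, Φ q.1 p.2))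
      (Set.range fun x : X => (B x, x)) := by
  constructor
  · intro hB p hp
    obtain ⟨y, rfl⟩ := hp
    refine ⟨?_, ?_, ?_⟩
    · rintro q ⟨x, rfl⟩
      exact ⟨Φ (B y) x, by simp [← hB x y]⟩
    · rintro q ⟨x, rfl⟩ r ⟨z, rfl⟩ h
      have : Φ (B y) x = Φ (B y) z := congrArg Prod.snd h
      simp only [Equiv.apply_eq_iff_eq] at this
      simp [this]
    · rintro q ⟨z, rfl⟩
      refine ⟨(B ((Φ (B y))⁻¹ z), (Φ (B y))⁻¹ z), ⟨_, rfl⟩, ?_⟩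
      have := hB ((Φ (B y))⁻¹ z) y
      simp only [Equiv.apply_symm_apply] at this ⊢
      simpa [Equiv.Perm.inv_def] using this
  · intro h x y
    have hm := (h (B y, y) ⟨y, rfl⟩).1 ⟨x, rfl⟩
    obtain ⟨z, hz⟩ := hm
    have h1 : B z = opA (B x) (B y) := congrArg Prod.fst hz
    have h2 : z = Φ (B y) x := congrArg Prod.snd hz
    rw [← h1, h2]
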